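/- If n is even, then the polynomial q_n(λ) − λ·q_{n-1}(λ) has degree n/2 − 1 and all its coefficients are positive, where q_n is the matching generating polynomial of K_n. -/

import Mathlib

open Finset SimpleGraph

noncomputable section

/-- `M` is a matching of `G`: a finset of edges of `G`, pairwise vertex-disjoint. -/
def IsMatchingSet {V : Type*} (G : SimpleGraph V) (M : Finset (Sym2 V)) : Prop :=
  (∀ e ∈ M, e ∈ G.edgeSet) ∧
    ∀ e ∈ M, ∀ f ∈ M, e ≠ f → ∀ v : V, ¬(v ∈ e ∧ v ∈ f)

/-- The finset of all matchings of `G`. -/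
def matchingsOf {V : Type*} [Fintype V] (G : SimpleGraph V) : Finset (Finset (Sym2 V)) := by
  classical exact Finset.univ.filter fun M => IsMatchingSet G M

/-- `m_k(G)`: the number of matchings of size `k` in `G`. -/
def mCount {V : Type*} [Fintype V] (G : SimpleGraph V) (k : ℕ) : ℕ := by
  classical exact ((matchingsOf G).filter fun M => M.card = k).card

/-- The matching generating polynomial (partition function) `M_G(λ) = ∑_M λ^{|M|}`. -/
def matchingGen {V : Type*} [Fintype V] (G : SimpleGraph V) (lam : ℝ) : ℝ :=
  ∑ M ∈ matchingsOf G, lam ^ M.card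

/-- `q n` : the matching generating polynomial of the complete graph `K_n`. -/
def q (n : ℕ) (lam : ℝ) : ℝ := matchingGen (⊤ : SimpleGraph (Fin n)) lam

/-- The matching generating polynomial of `K_n` as a polynomial. -/
def qPoly (n : ℕ) : Polynomial ℝ :=
  ∑ M ∈ matchingsOf (⊤ : SimpleGraph (Fin n)), Polynomial.X ^ M.card

namespace QAux

lemma mem_matchingsOf {V : Type*} [Fintype V] {G : SimpleGraph V} {M : Finset (Sym2 V)} :
    M ∈ matchingsOf G ↔ IsMatchingSet G M := by
  unfold matchingsOf; simp

lemma coeff_qPoly (n r : ℕ) :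
    (qPoly n).coeff r = (mCount (⊤ : SimpleGraph (Fin n)) r : ℝ) := by
  classical
  unfold qPoly mCount
  rw [Polynomial.finset_sum_coeff]
  simp only [Polynomial.coeff_X_pow]
  rw [Finset.sum_boole]
  congr 2
  apply Finset.filter_congr
  intro M _
  simp [eq_comm]

/-- the vertices covered by a finset of edges -/
def suppM {V : Type*} [Fintype V] (M : Finset (Sym2 V)) : Finset V := by
  classical exact Finset.univ.filter (fun v => ∃ e ∈ M, v ∈ e)

lemma mem_suppM {V : Type*} [Fintype V] {M : Finset (Sym2 V)} {v : V} :
    v ∈ suppM M ↔ ∃ e ∈ M, v ∈ e := by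
  unfold suppM; simp

lemma card_suppM {V : Type*} [Fintype V] [DecidableEq V] {M : Finset (Sym2 V)}
    (hM : IsMatchingSet (⊤ : SimpleGraph V) M) :
    (suppM M).card = 2 * M.card := by
  classical
  have hnd : ∀ e ∈ M, ¬ e.IsDiag := by
    intro e he
    have := hM.1 e he
    rwa [SimpleGraph.edgeSet_top] at this
  have : suppM M = M.biUnion (fun e => Finset.univ.filter (· ∈ e)) := by
    ext v; simp [mem_suppM]
  rw [this, Finset.card_biUnion]
  · rw [Finset.sum_congr rfl (g := fun _ => 2), Finset.sum_const, smul_eq_mul, mul_comm]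
    intro e he
    obtain ⟨a, b⟩ := e
    have hab : a ≠ b := by simpa using hnd _ he
    have : Finset.univ.filter (· ∈ s(a,b)) = {a, b} := by
      ext v; simp [Sym2.mem_iff]
    rw [this, Finset.card_pair hab]
  · intro e he f hf hef
    simp only [Finset.disjoint_left, Finset.mem_filter]
    rintro v ⟨-, hv⟩ ⟨-, hv'⟩
    exact hM.2 e he f hf hef v ⟨hv, hv'⟩

lemma two_mul_card_le {V : Type*} [Fintype V] {M : Finset (Sym2 V)}
    (h : IsMatchingSet (⊤ : SimpleGraph V) M) : 2 * M.card ≤ Fintype.card V := by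
  classical
  rw [← card_suppM h]
  simpa using Finset.card_le_card (Finset.subset_univ (suppM M))

lemma mCount_zero (n : ℕ) : mCount (⊤ : SimpleGraph (Fin n)) 0 = 1 := by
  classical
  unfold mCount
  convert Finset.card_singleton (∅ : Finset (Sym2 (Fin n))) using 2
  ext M
  simp only [Finset.mem_filter, Finset.mem_singleton, Finset.card_eq_zero, mem_matchingsOf]
  constructor
  · rintro ⟨-, h⟩; exact h
  · rintro rfl
    exact ⟨⟨by simp, by simp⟩, rfl⟩

lemma mCount_eq_zero {n r : ℕ} (h : n < 2 * r) : mCount (⊤ : SimpleGraph (Fin n)) r = 0 := by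
  classical
  unfold mCount
  rw [Finset.card_eq_zero, Finset.filter_eq_empty_iff]
  rintro M hM rfl
  have := two_mul_card_le (mem_matchingsOf.mp hM)
  simp only [Fintype.card_fin] at this
  omega

def emb (m : ℕ) : Sym2 (Fin m) ↪ Sym2 (Fin (m+1)) :=
  Function.Embedding.sym2Map ⟨Fin.castSucc, Fin.castSucc_injective m⟩

lemma last_not_mem_emb {m : ℕ} (e : Sym2 (Fin m)) : Fin.last m ∉ emb m e := by
  simp only [emb, Function.Embedding.sym2Map_apply, Sym2.mem_map, Function.Embedding.coeFn_mk]
  rintro ⟨a, -, h⟩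
  exact (Fin.castSucc_lt_last a).ne h

lemma castSucc_mem_emb {m : ℕ} {a : Fin m} {e : Sym2 (Fin m)} :
    Fin.castSucc a ∈ emb m e ↔ a ∈ e := by
  simp only [emb, Function.Embedding.sym2Map_apply, Sym2.mem_map, Function.Embedding.coeFn_mk]
  constructor
  · rintro ⟨b, hb, h⟩
    rwa [Fin.castSucc_injective m h] at hb
  · exact fun h => ⟨a, h, rfl⟩

lemma mem_emb {m : ℕ} {v : Fin (m+1)} {e : Sym2 (Fin m)} (h : v ∈ emb m e) :
    ∃ a : Fin m, v = Fin.castSucc a := by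
  simp only [emb, Function.Embedding.sym2Map_apply, Sym2.mem_map, Function.Embedding.coeFn_mk] at h
  obtain ⟨a, -, rfl⟩ := h
  exact ⟨a, rfl⟩


end QAux
namespace QAux

lemma map_matching {m : ℕ} {N : Finset (Sym2 (Fin m))}
    (hN : IsMatchingSet (⊤ : SimpleGraph (Fin m)) N) :
    IsMatchingSet (⊤ : SimpleGraph (Fin (m+1))) (N.map (emb m)) := by
  constructor
  · intro e' he'
    rw [Finset.mem_map] at he'
    obtain ⟨e, he, rfl⟩ := he'
    have := hN.1 e he
    rw [SimpleGraph.edgeSet_top] at this ⊢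
    simp only [Set.mem_compl_iff, Sym2.mem_diagSet] at this ⊢
    intro hd
    refine this ?_
    rw [emb, Function.Embedding.sym2Map_apply] at hd
    exact (Sym2.isDiag_map (Fin.castSucc_injective m)).mp hd
  · intro e' he' f' hf' hef v ⟨hv1, hv2⟩
    rw [Finset.mem_map] at he' hf'
    obtain ⟨e, he, rfl⟩ := he'
    obtain ⟨f, hf, rfl⟩ := hf'
    obtain ⟨a, rfl⟩ := mem_emb hv1
    rw [castSucc_mem_emb] at hv1 hv2
    exact hN.2 e he f hf (fun h => hef (by rw [h])) a ⟨hv1, hv2⟩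

lemma insert_matching {m : ℕ} {N : Finset (Sym2 (Fin m))}
    (hN : IsMatchingSet (⊤ : SimpleGraph (Fin m)) N) {v : Fin m} (hv : v ∉ suppM N) :
    IsMatchingSet (⊤ : SimpleGraph (Fin (m+1)))
      (insert s(Fin.castSucc v, Fin.last m) (N.map (emb m))) ∧
    (insert s(Fin.castSucc v, Fin.last m) (N.map (emb m))).card = N.card + 1 := by
  classical
  have hmap := map_matching hN
  have hnew : s(Fin.castSucc v, Fin.last m) ∉ N.map (emb m) := by
    rw [Finset.mem_map]
    rintro ⟨e, -, he⟩
    exact last_not_mem_emb e (he ▸ Sym2.mem_mk_right _ _)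
  have hdisj : ∀ f' ∈ N.map (emb m), ∀ w : Fin (m+1),
      ¬(w ∈ s(Fin.castSucc v, Fin.last m) ∧ w ∈ f') := by
    rintro f' hf' w ⟨hw1, hw2⟩
    rw [Finset.mem_map] at hf'
    obtain ⟨f, hf, rfl⟩ := hf'
    rw [Sym2.mem_iff] at hw1
    rcases hw1 with rfl | rfl
    · rw [castSucc_mem_emb] at hw2
      exact hv (mem_suppM.mpr ⟨f, hf, hw2⟩)
    · exact last_not_mem_emb f hw2
  refine ⟨⟨?_, ?_⟩, ?_⟩
  · intro e he
    rw [Finset.mem_insert] at he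
    rcases he with rfl | he
    · rw [SimpleGraph.edgeSet_top]
      simp only [Set.mem_compl_iff, Sym2.mem_diagSet, Sym2.isDiag_iff_proj_eq]
      exact (Fin.castSucc_lt_last v).ne
    · exact hmap.1 e he
  · intro e he f hf hef w hw
    rw [Finset.mem_insert] at he hf
    rcases he with rfl | he <;> rcases hf with rfl | hf
    · exact hef rfl
    · exact hdisj f hf w hw
    · exact hdisj e he w ⟨hw.2, hw.1⟩
    · exact hmap.2 e he f hf hef w hw
  · rw [Finset.card_insert_of_notMem hnew, Finset.card_map]

lemma filter_insert_last {m : ℕ} (N : Finset (Sym2 (Fin m))) (v : Fin m) :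
    (insert s(Fin.castSucc v, Fin.last m) (N.map (emb m))).filter
      (fun e => Fin.last m ∉ e) = N.map (emb m) := by
  classical
  rw [Finset.filter_insert, if_neg (by simp [Sym2.mem_mk_right])]
  rw [Finset.filter_true_of_mem]
  intro e he
  rw [Finset.mem_map] at he
  obtain ⟨f, -, rfl⟩ := he
  exact last_not_mem_emb f

lemma insert_inj {m : ℕ} {N N' : Finset (Sym2 (Fin m))} {v v' : Fin m}
    (h : insert s(Fin.castSucc v, Fin.last m) (N.map (emb m)) =
         insert s(Fin.castSucc v', Fin.last m) (N'.map (emb m))) : N = N' ∧ v = v' := by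
  classical
  have hmap : N.map (emb m) = N'.map (emb m) := by
    rw [← filter_insert_last N v, ← filter_insert_last N' v', h]
  have hNN : N = N' := Finset.map_injective (emb m) hmap
  subst hNN
  refine ⟨rfl, ?_⟩
  have : s(Fin.castSucc v, Fin.last m) ∈
      insert s(Fin.castSucc v', Fin.last m) (N.map (emb m)) := by
    rw [← h]; exact Finset.mem_insert_self _ _
  rw [Finset.mem_insert] at this
  rcases this with heq | hmem
  · rw [Sym2.eq_iff] at heq
    rcases heq with ⟨h1, -⟩ | ⟨h1, h2⟩
    · exact Fin.castSucc_injective m h1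
    · exact absurd h1 (Fin.castSucc_lt_last v).ne
  · exact absurd hmem (by
      rw [Finset.mem_map]
      rintro ⟨e, -, he⟩
      exact last_not_mem_emb e (he ▸ Sym2.mem_mk_right _ _))

end QAux
namespace QAux

def uncov {m : ℕ} [NeZero m] (N : Finset (Sym2 (Fin m))) : Fin m := by
  classical
  exact if h : (Finset.univ \ suppM N).Nonempty then (Finset.univ \ suppM N).min' h else 0

lemma uncov_not_mem {m : ℕ} [NeZero m] {N : Finset (Sym2 (Fin m))}
    (h : (Finset.univ \ suppM N).Nonempty) : uncov N ∉ suppM N := by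
  classical
  have : uncov N ∈ Finset.univ \ suppM N := by
    rw [uncov, dif_pos h]
    exact Finset.min'_mem _ h
  simpa using (Finset.mem_sdiff.mp this).2

lemma uncov_eq {m : ℕ} [NeZero m] {N : Finset (Sym2 (Fin m))} {v : Fin m}
    (h : Finset.univ \ suppM N = {v}) : uncov N = v := by
  classical
  have hne : (Finset.univ \ suppM N).Nonempty := by
    rw [h]; exact Finset.singleton_nonempty v
  have hmem : uncov N ∈ Finset.univ \ suppM N := by
    rw [uncov, dif_pos hne]; exact Finset.min'_mem _ hne
  rw [h, Finset.mem_singleton] at hmem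
  exact hmem

def ins {m : ℕ} [NeZero m] (N : Finset (Sym2 (Fin m))) : Finset (Sym2 (Fin (m+1))) :=
  insert s(Fin.castSucc (uncov N), Fin.last m) (N.map (emb m))

lemma uncov_nonempty {m : ℕ} [NeZero m] {N : Finset (Sym2 (Fin m))}
    (hN : IsMatchingSet (⊤ : SimpleGraph (Fin m)) N) (h : 2 * N.card < m) :
    (Finset.univ \ suppM N).Nonempty := by
  classical
  rw [← Finset.card_pos, Finset.card_sdiff_of_subset (Finset.subset_univ _), card_suppM hN]
  simp only [Finset.card_univ, Fintype.card_fin]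
  omega

lemma ins_mem {m : ℕ} [NeZero m] {N : Finset (Sym2 (Fin m))}
    (hN : IsMatchingSet (⊤ : SimpleGraph (Fin m)) N) (h : 2 * N.card < m) :
    IsMatchingSet (⊤ : SimpleGraph (Fin (m+1))) (ins N) ∧ (ins N).card = N.card + 1 :=
  insert_matching hN (uncov_not_mem (uncov_nonempty hN h))

lemma ins_inj {m : ℕ} [NeZero m] {N N' : Finset (Sym2 (Fin m))}
    (h : ins N = ins N') : N = N' :=
  (insert_inj h).1

lemma exists_matching (n k : ℕ) (hn : 0 < n) (h : 2 * k ≤ n) :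
    ∃ M : Finset (Sym2 (Fin n)), IsMatchingSet (⊤ : SimpleGraph (Fin n)) M ∧
      M.card = k ∧ ∀ e ∈ M, ∀ v : Fin n, v ∈ e → (v : ℕ) < 2 * k := by
  classical
  set f : ℕ → Sym2 (Fin n) :=
    fun i => s(⟨(2*i) % n, Nat.mod_lt _ hn⟩, ⟨(2*i+1) % n, Nat.mod_lt _ hn⟩) with hf
  have hval : ∀ i < k, ((⟨(2*i) % n, Nat.mod_lt _ hn⟩ : Fin n) : ℕ) = 2*i ∧
      ((⟨(2*i+1) % n, Nat.mod_lt _ hn⟩ : Fin n) : ℕ) = 2*i+1 := by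
    intro i hi
    constructor <;> simp only [] <;> exact Nat.mod_eq_of_lt (by omega)
  have hmem : ∀ i < k, ∀ v : Fin n, v ∈ f i ↔ (v : ℕ) = 2*i ∨ (v : ℕ) = 2*i+1 := by
    intro i hi v
    rw [hf]
    simp only [Sym2.mem_iff, Fin.ext_iff]
    rw [show (2*i) % n = 2*i from Nat.mod_eq_of_lt (by omega),
        show (2*i+1) % n = 2*i+1 from Nat.mod_eq_of_lt (by omega)]
  refine ⟨(Finset.range k).image f, ⟨?_, ?_⟩, ?_, ?_⟩
  · intro e he
    rw [Finset.mem_image] at he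
    obtain ⟨i, hi, rfl⟩ := he
    rw [Finset.mem_range] at hi
    rw [SimpleGraph.edgeSet_top]
    simp only [Set.mem_compl_iff, Sym2.mem_diagSet, hf, Sym2.isDiag_iff_proj_eq, Fin.ext_iff]
    rw [show (2*i) % n = 2*i from Nat.mod_eq_of_lt (by omega),
        show (2*i+1) % n = 2*i+1 from Nat.mod_eq_of_lt (by omega)]
    omega
  · intro e he g hg heg v ⟨hv1, hv2⟩
    rw [Finset.mem_image] at he hg
    obtain ⟨i, hi, rfl⟩ := he
    obtain ⟨j, hj, rfl⟩ := hg
    rw [Finset.mem_range] at hi hj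
    rw [hmem i hi] at hv1
    rw [hmem j hj] at hv2
    have : i = j := by omega
    exact heg (by rw [this])
  · rw [Finset.card_image_of_injOn, Finset.card_range]
    intro i hi j hj hij
    rw [Finset.mem_coe, Finset.mem_range] at hi hj
    have hmm : (⟨(2*i) % n, Nat.mod_lt _ hn⟩ : Fin n) ∈ f j := by
      rw [← hij, hf]; exact Sym2.mem_mk_left _ _
    rw [hmem j hj] at hmm
    simp only [show (2*i) % n = 2*i from Nat.mod_eq_of_lt (by omega)] at hmm
    omega
  · intro e he v hv
    rw [Finset.mem_image] at he
    obtain ⟨i, hi, rfl⟩ := he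
    rw [Finset.mem_range] at hi
    rw [hmem i hi] at hv
    omega

end QAux
namespace QAux

lemma mCount_lt (m k : ℕ) (h : 2*k+3 ≤ m) :
    mCount (⊤ : SimpleGraph (Fin m)) k < mCount (⊤ : SimpleGraph (Fin (m+1))) (k+1) := by
  classical
  haveI : NeZero m := ⟨by omega⟩
  unfold mCount
  set S := (matchingsOf (⊤ : SimpleGraph (Fin m))).filter (fun M => M.card = k) with hS
  set T := (matchingsOf (⊤ : SimpleGraph (Fin (m+1)))).filter (fun M => M.card = k+1) with hT
  obtain ⟨M0, hM0m, hM0c, hM0b⟩ := exists_matching (m+1) (k+1) (by omega) (by omega)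
  have hM0T : M0 ∈ T := by
    rw [hT, Finset.mem_filter, mem_matchingsOf]; exact ⟨hM0m, hM0c⟩
  have hlastM0 : ∀ e ∈ M0, Fin.last m ∉ e := by
    intro e he hl
    have := hM0b e he _ hl
    rw [Fin.val_last] at this
    omega
  have key : ∀ N ∈ S, ins N ∈ T.erase M0 := by
    intro N hN
    rw [hS, Finset.mem_filter, mem_matchingsOf] at hN
    obtain ⟨hNm, hNc⟩ := hN
    have hins := ins_mem hNm (by omega : 2*N.card < m)
    rw [Finset.mem_erase]
    constructor
    · intro hEq
      have hmm : s(Fin.castSucc (uncov N), Fin.last m) ∈ ins N := by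
        rw [ins]; exact Finset.mem_insert_self _ _
      exact hlastM0 _ (hEq ▸ hmm) (Sym2.mem_mk_right _ _)
    · rw [hT, Finset.mem_filter, mem_matchingsOf]
      exact ⟨hins.1, by rw [hins.2, hNc]⟩
  have hle : S.card ≤ (T.erase M0).card :=
    Finset.card_le_card_of_injOn ins key (fun N _ N' _ h => ins_inj h)
  have h2 : (T.erase M0).card < T.card := by
    rw [Finset.card_erase_of_mem hM0T]
    have : 0 < T.card := Finset.card_pos.mpr ⟨M0, hM0T⟩
    omega
  omega

/-- the pullback of a matching on `Fin (m+1)` to `Fin m` -/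
def back {m : ℕ} (M : Finset (Sym2 (Fin (m+1)))) : Finset (Sym2 (Fin m)) := by
  classical exact Finset.univ.filter (fun e => emb m e ∈ M)

lemma mem_back {m : ℕ} {M : Finset (Sym2 (Fin (m+1)))} {e : Sym2 (Fin m)} :
    e ∈ back M ↔ emb m e ∈ M := by
  unfold back; simp

lemma back_ins {m : ℕ} [NeZero m] (N : Finset (Sym2 (Fin m))) : back (ins N) = N := by
  classical
  ext e
  rw [mem_back, ins, Finset.mem_insert]
  constructor
  · rintro (h | h)
    · exact absurd (h ▸ Sym2.mem_mk_right (Fin.castSucc (uncov N)) (Fin.last m))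
        (last_not_mem_emb e)
    · exact (Finset.mem_map' (emb m)).mp h
  · intro h
    exact Or.inr ((Finset.mem_map' (emb m)).mpr h)

end QAux
namespace QAux

lemma exists_emb_eq {m : ℕ} {f : Sym2 (Fin (m+1))} (hf : Fin.last m ∉ f) :
    ∃ g : Sym2 (Fin m), emb m g = f := by
  obtain ⟨a, b⟩ := f
  have ha : a ≠ Fin.last m := by rintro rfl; exact hf (Sym2.mem_mk_left _ _)
  have hb : b ≠ Fin.last m := by rintro rfl; exact hf (Sym2.mem_mk_right _ _)
  obtain ⟨a', rfl⟩ := Fin.eq_castSucc_of_ne_last ha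
  obtain ⟨b', rfl⟩ := Fin.eq_castSucc_of_ne_last hb
  exact ⟨s(a', b'), rfl⟩

lemma perfect_back {k : ℕ} {M : Finset (Sym2 (Fin (2*k+1+1)))}
    (hM : IsMatchingSet (⊤ : SimpleGraph (Fin (2*k+1+1))) M) (hc : M.card = k+1) :
    IsMatchingSet (⊤ : SimpleGraph (Fin (2*k+1))) (back M) ∧ (back M).card = k ∧
      ins (back M) = M := by
  classical
  have hsupp : suppM M = Finset.univ := by
    apply Finset.eq_univ_of_card
    rw [card_suppM hM, hc, Fintype.card_fin]
    omega
  have hl : Fin.last (2*k+1) ∈ suppM M := hsupp ▸ Finset.mem_univ _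
  rw [mem_suppM] at hl
  have hex : ∃ v : Fin (2*k+1), s(Fin.castSucc v, Fin.last (2*k+1)) ∈ M := by
    obtain ⟨e₀, he₀, hle₀⟩ := hl
    have hnd : ¬ e₀.IsDiag := by
      have := hM.1 _ he₀; rwa [SimpleGraph.edgeSet_top] at this
    obtain ⟨c, rfl⟩ := Sym2.mem_iff_exists.mp hle₀
    have hcne : c ≠ Fin.last (2*k+1) := by
      rintro rfl; exact hnd (by simp)
    obtain ⟨v, rfl⟩ := Fin.eq_castSucc_of_ne_last hcne
    exact ⟨v, by rwa [Sym2.eq_swap] at he₀⟩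
  obtain ⟨v, hv⟩ := hex
  have huniq : ∀ f ∈ M, Fin.last (2*k+1) ∈ f →
      f = s(Fin.castSucc v, Fin.last (2*k+1)) := by
    intro f hf hlf
    by_contra hne
    exact hM.2 f hf _ hv hne _ ⟨hlf, Sym2.mem_mk_right _ _⟩
  have hMeq : M = insert s(Fin.castSucc v, Fin.last (2*k+1))
      (M.filter (fun e => Fin.last (2*k+1) ∉ e)) := by
    ext f
    rw [Finset.mem_insert, Finset.mem_filter]
    constructor
    · intro hf
      by_cases hlf : Fin.last (2*k+1) ∈ f
      · exact Or.inl (huniq f hf hlf)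
      · exact Or.inr ⟨hf, hlf⟩
    · rintro (rfl | ⟨hf, -⟩)
      · exact hv
      · exact hf
  have hmb : (back M).map (emb (2*k+1)) = M.filter (fun e => Fin.last (2*k+1) ∉ e) := by
    ext f
    rw [Finset.mem_map, Finset.mem_filter]
    constructor
    · rintro ⟨g, hg, rfl⟩
      exact ⟨mem_back.mp hg, last_not_mem_emb g⟩
    · rintro ⟨hf, hlf⟩
      obtain ⟨g, rfl⟩ := exists_emb_eq hlf
      exact ⟨g, mem_back.mpr hf, rfl⟩
  have he₀nf : s(Fin.castSucc v, Fin.last (2*k+1)) ∉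
      M.filter (fun e => Fin.last (2*k+1) ∉ e) := by
    rw [Finset.mem_filter]
    rintro ⟨-, h⟩
    exact h (Sym2.mem_mk_right _ _)
  have hcard : (back M).card = k := by
    have h1 : M.card = (M.filter (fun e => Fin.last (2*k+1) ∉ e)).card + 1 := by
      conv_lhs => rw [hMeq]
      rw [Finset.card_insert_of_notMem he₀nf]
    have h2 : (back M).card = (M.filter (fun e => Fin.last (2*k+1) ∉ e)).card := by
      rw [← Finset.card_map (emb (2*k+1)), hmb]
    omega
  have hbm : IsMatchingSet (⊤ : SimpleGraph (Fin (2*k+1))) (back M) := by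
    constructor
    · intro e he
      rw [mem_back] at he
      have h1 := hM.1 _ he
      rw [SimpleGraph.edgeSet_top] at h1 ⊢
      intro hd
      apply h1
      rw [emb, Function.Embedding.sym2Map_apply]
      exact hd.map
    · intro e he f hf hef w hw
      rw [mem_back] at he hf
      exact hM.2 _ he _ hf (fun h => hef ((emb _).injective h)) (Fin.castSucc w)
        ⟨castSucc_mem_emb.mpr hw.1, castSucc_mem_emb.mpr hw.2⟩
  have hsd : Finset.univ \ suppM (back M) = {v} := by
    ext u
    rw [Finset.mem_sdiff, Finset.mem_singleton]
    simp only [Finset.mem_univ, true_and]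
    rw [mem_suppM]
    constructor
    · intro hu
      by_contra hne
      apply hu
      have hum : Fin.castSucc u ∈ suppM M := hsupp ▸ Finset.mem_univ _
      rw [mem_suppM] at hum
      obtain ⟨f, hf, huf⟩ := hum
      have hfe : f ≠ s(Fin.castSucc v, Fin.last (2*k+1)) := by
        rintro rfl
        rw [Sym2.mem_iff] at huf
        rcases huf with h | h
        · exact hne (Fin.castSucc_injective _ h)
        · exact (Fin.castSucc_lt_last u).ne h
      have hlf : Fin.last (2*k+1) ∉ f := fun h => hfe (huniq f hf h)
      obtain ⟨g, rfl⟩ := exists_emb_eq hlf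
      exact ⟨g, mem_back.mpr hf, castSucc_mem_emb.mp huf⟩
    · rintro rfl h
      obtain ⟨g, hg, hug⟩ := h
      rw [mem_back] at hg
      have hne : emb (2*k+1) g ≠ s(Fin.castSucc u, Fin.last (2*k+1)) := by
        intro h'
        exact last_not_mem_emb g (h' ▸ Sym2.mem_mk_right _ _)
      exact hM.2 _ hg _ hv hne _ ⟨castSucc_mem_emb.mpr hug, Sym2.mem_mk_left _ _⟩
  refine ⟨hbm, hcard, ?_⟩
  rw [ins, uncov_eq hsd, hmb, ← hMeq]

lemma mCount_eq (k : ℕ) :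
    mCount (⊤ : SimpleGraph (Fin (2*k+1+1))) (k+1) =
      mCount (⊤ : SimpleGraph (Fin (2*k+1))) k := by
  classical
  unfold mCount
  refine Finset.card_bij' (fun M _ => back M) (fun N _ => ins N) ?_ ?_ ?_ ?_
  · intro M hM
    rw [Finset.mem_filter, mem_matchingsOf] at hM
    obtain ⟨h1, h2, -⟩ := perfect_back hM.1 hM.2
    rw [Finset.mem_filter, mem_matchingsOf]
    exact ⟨h1, h2⟩
  · intro N hN
    rw [Finset.mem_filter, mem_matchingsOf] at hN
    obtain ⟨hN1, hN2⟩ := hN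
    have hins := ins_mem hN1 (by omega : 2*N.card < 2*k+1)
    rw [Finset.mem_filter, mem_matchingsOf]
    exact ⟨hins.1, by rw [hins.2, hN2]⟩
  · intro M hM
    rw [Finset.mem_filter, mem_matchingsOf] at hM
    exact (perfect_back hM.1 hM.2).2.2
  · intro N _
    exact back_ins N

end QAux

open QAux

/-- if `n` is even (and positive), then `q_n(λ) − λ·q_{n-1}(λ)` has
degree `n/2 − 1` and all its coefficients are positive. -/
theorem qPoly_sub_X_mul_coeff_pos (n : ℕ) (hn : 0 < n) (hev : Even n) :
    (qPoly n - Polynomial.X * qPoly (n - 1)).natDegree = n / 2 - 1 ∧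
      ∀ r ≤ n / 2 - 1, 0 < (qPoly n - Polynomial.X * qPoly (n - 1)).coeff r := by
  classical
  obtain ⟨s, hs⟩ := hev
  have hs1 : 1 ≤ s := by omega
  have hnd2 : n / 2 = s := by omega
  set p := qPoly n - Polynomial.X * qPoly (n-1) with hp
  have hcoeff : ∀ r : ℕ, p.coeff r =
      (mCount (⊤ : SimpleGraph (Fin n)) r : ℝ) -
        (if r = 0 then 0 else (mCount (⊤ : SimpleGraph (Fin (n-1))) (r-1) : ℝ)) := by
    intro r
    rw [hp, Polynomial.coeff_sub, coeff_qPoly]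
    congr 1
    cases r with
    | zero => simp [Polynomial.mul_coeff_zero]
    | succ t => rw [Polynomial.coeff_X_mul, coeff_qPoly]; simp
  have hpos : ∀ r ≤ s - 1, 0 < p.coeff r := by
    intro r hr
    rw [hcoeff]
    cases r with
    | zero => simp [mCount_zero]
    | succ t =>
      rw [if_neg (Nat.succ_ne_zero t), sub_pos]
      have hlt := mCount_lt (n-1) t (by omega)
      have hn1 : n - 1 + 1 = n := by omega
      rw [hn1] at hlt
      have : t + 1 - 1 = t := rfl
      rw [this]
      exact_mod_cast hlt
  have hzero : ∀ r, s - 1 < r → p.coeff r = 0 := by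
    intro r hr
    rw [hcoeff]
    rcases Nat.lt_or_ge r (s+1) with h | h
    · have hrs : r = s := by omega
      subst hrs
      rw [if_neg (by omega)]
      have heq := mCount_eq (r-1)
      have e1 : 2*(r-1)+1+1 = n := by omega
      have e2 : (r-1)+1 = r := by omega
      have e3 : 2*(r-1)+1 = n-1 := by omega
      rw [e1, e2, e3] at heq
      rw [heq]
      simp
    · rw [if_neg (by omega), mCount_eq_zero (by omega), mCount_eq_zero (by omega)]
      simp
  constructor
  · have hub : p.natDegree ≤ s - 1 :=
      Polynomial.natDegree_le_iff_coeff_eq_zero.mpr (fun N hN => hzero N hN)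
    have hlb : s - 1 ≤ p.natDegree :=
      Polynomial.le_natDegree_of_ne_zero (ne_of_gt (hpos (s-1) le_rfl))
    omega
  · intro r hr
    exact hpos r (by omega)
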